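/- Let p ∈ Hol(Δ,ℂ) with Re p(z) ≥ 0 for all z ∈ Δ admit the representation p(z) = a·(1+z)/(1−z) + b + γ(z), where ∠lim_{z→1} γ(z)/(z−1) = 0. Then: (i) a = δ_p(1)/2 ≥ 0, where δ_p(1) = ∠lim_{z→1}(1−z)p(z) is the charge of p at 1; (ii) γ ≡ 0 on Δ if and only if Re p(z) ≥ Re b ≥ 0 for all z ∈ Δ. -/

import Mathlib

open Complex Filter Set Metric ComplexConjugate

noncomputable section

/-- The open unit disk in ℂ. -/
def unitDisk : Set ℂ := {z : ℂ | ‖z‖ < 1}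

/-- Stolz angle (nontangential approach region) with vertex `ζ` and aperture `k`. -/
def stolzAngle (ζ : ℂ) (k : ℝ) : Set ℂ :=
  {z : ℂ | z ∈ unitDisk ∧ ‖z - ζ‖ < k * (1 - ‖z‖)}

/-- Angular (nontangential) limit of `g` at the boundary point `ζ` equals `L`:
the limit of `g` within every Stolz angle with vertex `ζ`. -/
def AngularLimAt (g : ℂ → ℂ) (ζ L : ℂ) : Prop :=
  ∀ k : ℝ, 1 < k → Filter.Tendsto g (nhdsWithin ζ (stolzAngle ζ k)) (nhds L)

/-- `g` belongs to `C_A^3(1)` with angular boundary values `a0 = g(1)`, `a1 = g'(1)`,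
`a2 = g''(1)`, `a3 = g'''(1)`: the remainder of the third order Taylor expansion at `1`
is `o((z-1)^3)` angularly. -/
def CA3At1 (g : ℂ → ℂ) (a0 a1 a2 a3 : ℂ) : Prop :=
  AngularLimAt (fun z =>
    (g z - (a0 + a1 * (z - 1) + a2 / 2 * (z - 1) ^ 2 + a3 / 6 * (z - 1) ^ 3)) / (z - 1) ^ 3) 1 0

/-- Holomorphic self-mapping of the unit disk. -/
def HolSelfMap (F : ℂ → ℂ) : Prop :=
  DifferentiableOn ℂ F unitDisk ∧ Set.MapsTo F unitDisk unitDisk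

/-- `F` is a linear fractional transformation on the unit disk. -/
def IsLFTOn (F : ℂ → ℂ) : Prop :=
  ∃ a b c d : ℂ, a * d - b * c ≠ 0 ∧ ∀ z ∈ unitDisk, F z = (a * z + b) / (c * z + d)

/-- `F` is a (holomorphic) automorphism of the unit disk. -/
def IsAutomorphismOfDisk (F : ℂ → ℂ) : Prop :=
  HolSelfMap F ∧ ∃ G : ℂ → ℂ, HolSelfMap G ∧
    (∀ z ∈ unitDisk, G (F z) = z) ∧ (∀ z ∈ unitDisk, F (G z) = z)

/-- The horocycle `D(1,k)` internally tangent to the unit circle at 1. -/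
def horocycle (k : ℝ) : Set ℂ :=
  {z : ℂ | z ∈ unitDisk ∧ ‖1 - z‖ ^ 2 / (1 - ‖z‖ ^ 2) < k}

/-- `τ` is the Denjoy–Wolff point of `F`: the iterates converge pointwise to `τ`. -/
def IsDenjoyWolffPt (F : ℂ → ℂ) (τ : ℂ) : Prop :=
  ∀ z ∈ unitDisk, Filter.Tendsto (fun n : ℕ => F^[n] z) Filter.atTop (nhds τ)

/-- A one-parameter continuous semigroup of holomorphic self-mappings of the disk. -/
def IsSemigroupOnDisk (S : ℝ → ℂ → ℂ) : Prop :=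
  (∀ t : ℝ, 0 ≤ t → HolSelfMap (S t)) ∧
  (∀ t : ℝ, 0 ≤ t → ∀ s : ℝ, 0 ≤ s → ∀ z ∈ unitDisk, S (t + s) z = S t (S s z)) ∧
  (∀ z ∈ unitDisk, Filter.Tendsto (fun t : ℝ => S t z) (nhdsWithin 0 (Set.Ioi 0)) (nhds z))

/-- `f` is the infinitesimal generator of the semigroup `S`. -/
def Generates (f : ℂ → ℂ) (S : ℝ → ℂ → ℂ) : Prop :=
  IsSemigroupOnDisk S ∧
  ∀ z ∈ unitDisk,
    Filter.Tendsto (fun t : ℝ => (z - S t z) / (t : ℂ)) (nhdsWithin 0 (Set.Ioi 0)) (nhds (f z))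

/-- `f` belongs to the class `G(Δ)` of infinitesimal generators on the disk. -/
def IsGenerator (f : ℂ → ℂ) : Prop :=
  DifferentiableOn ℂ f unitDisk ∧ ∃ S : ℝ → ℂ → ℂ, Generates f S

/-- `f` generates a one-parameter group of automorphisms of the disk
(equivalently, both `f` and `-f` are generators). -/
def GeneratesGroupOfAutomorphisms (f : ℂ → ℂ) : Prop :=
  IsGenerator f ∧ IsGenerator (fun z => -f z)

/-- Hyperbolic automorphism of the disk: an automorphism with boundary Denjoy–Wolff point `τ`
and angular derivative `0 < F'(τ) < 1`. -/
def IsHyperbolicAut (F : ℂ → ℂ) : Prop :=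
  IsAutomorphismOfDisk F ∧ ∃ τ : ℂ, ‖τ‖ = 1 ∧ IsDenjoyWolffPt F τ ∧
    ∃ α : ℝ, 0 < α ∧ α < 1 ∧ AngularLimAt (fun z => (F z - τ) / (z - τ)) τ (α : ℂ)

/-- Parabolic automorphism of the disk: an automorphism with boundary Denjoy–Wolff point `τ`
and angular derivative `F'(τ) = 1`. -/
def IsParabolicAut (F : ℂ → ℂ) : Prop :=
  IsAutomorphismOfDisk F ∧ ∃ τ : ℂ, ‖τ‖ = 1 ∧ IsDenjoyWolffPt F τ ∧
    AngularLimAt (fun z => (F z - τ) / (z - τ)) τ 1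

lemma unitDisk_eq : unitDisk = Metric.ball (0:ℂ) 1 := by
  ext z; simp [unitDisk, Metric.mem_ball, Complex.dist_eq]

lemma isOpen_unitDisk : IsOpen unitDisk := by rw [unitDisk_eq]; exact isOpen_ball

lemma preconn_unitDisk : IsPreconnected unitDisk := by
  rw [unitDisk_eq]; exact (convex_ball _ _).isPreconnected

-- key normSq identity
lemma normSq_id (z w : ℂ) :
    normSq (1 - conj w * z) - normSq (z - w) = (1 - normSq w) * (1 - normSq z) := by
  simp only [normSq_apply, Complex.sub_re, Complex.sub_im, Complex.mul_re, Complex.mul_im,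
    Complex.conj_re, Complex.conj_im, Complex.one_re, Complex.one_im]
  ring

lemma normSq_id2 (A B : ℂ) :
    normSq (A + conj B) - normSq (A - B) = 4 * A.re * B.re := by
  simp only [normSq_apply, Complex.add_re, Complex.add_im, Complex.sub_re, Complex.sub_im,
    Complex.conj_re, Complex.conj_im]
  ring

lemma ne_one_of_mem (z : ℂ) (hz : z ∈ unitDisk) : z ≠ 1 := by
  intro h; simp [unitDisk, h] at hz

lemma one_sub_ne (z : ℂ) (hz : z ∈ unitDisk) : (1:ℂ) - z ≠ 0 := by
  intro h; exact ne_one_of_mem z hz (by linear_combination -h)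

lemma kernel_re (z : ℂ) (hz : z ∈ unitDisk) :
    ((1 + z) / (1 - z)).re = (1 - normSq z) / normSq (1 - z) := by
  rw [Complex.div_re]
  simp only [Complex.add_re, Complex.add_im, Complex.sub_re, Complex.sub_im, Complex.one_re,
    Complex.one_im, normSq_apply]
  ring_nf

lemma kernel_re_nonneg (z : ℂ) (hz : z ∈ unitDisk) :
    0 ≤ ((1 + z) / (1 - z)).re := by
  rw [kernel_re z hz]
  have h1 : normSq z < 1 := by
    have := hz; simp only [unitDisk, mem_setOf_eq] at this
    calc normSq z = (‖z‖)^2 := (Complex.sq_norm z).symm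
    _ < 1 := by nlinarith [norm_nonneg z]
  have h2 : 0 < normSq (1 - z) := normSq_pos.2 (one_sub_ne z hz)
  have := normSq_nonneg z
  apply div_nonneg <;> nlinarith

lemma normSq_lt_one {z : ℂ} (hz : z ∈ unitDisk) : normSq z < 1 := by
  have := hz; simp only [unitDisk, mem_setOf_eq] at this
  calc normSq z = (‖z‖)^2 := (Complex.sq_norm z).symm
  _ < 1 := by nlinarith [norm_nonneg z]

lemma mem_of_normSq_lt {z : ℂ} (hz : normSq z < 1) : z ∈ unitDisk := by
  simp only [unitDisk, mem_setOf_eq]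
  nlinarith [Complex.sq_norm z, norm_nonneg z]

/-- Schwarz–Pick for maps into the right half-plane, normSq form. -/
lemma schwarz_pick (h : ℂ → ℂ) (hd : DifferentiableOn ℂ h unitDisk)
    (hre : ∀ z ∈ unitDisk, 0 < (h z).re) {z w : ℂ} (hz : z ∈ unitDisk) (hw : w ∈ unitDisk) :
    normSq (h z - h w) * normSq (1 - conj w * z)
      ≤ normSq (z - w) * normSq (h z + conj (h w)) := by
  set φ : ℂ → ℂ := fun ζ => (ζ + w) / (1 + conj w * ζ) with hφ
  have hwns : normSq w < 1 := normSq_lt_one hw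
  have hden : ∀ ζ ∈ unitDisk, 1 + conj w * ζ ≠ 0 := by
    intro ζ hζ h0
    have h3 : normSq (conj w * ζ) < 1 := by
      rw [map_mul, normSq_conj]; nlinarith [normSq_lt_one hζ, normSq_nonneg w, normSq_nonneg ζ]
    have h2 : conj w * ζ = -1 := by linear_combination h0
    rw [h2, normSq_neg, normSq_one] at h3
    exact lt_irrefl 1 h3
  have hφmem : ∀ ζ ∈ unitDisk, φ ζ ∈ unitDisk := by
    intro ζ hζ
    have hd0 : normSq (1 + conj w * ζ) ≠ 0 := (normSq_pos.2 (hden ζ hζ)).ne'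
    apply mem_of_normSq_lt
    rw [hφ]; simp only
    rw [map_div₀]
    rw [div_lt_one (lt_of_le_of_ne (normSq_nonneg _) (Ne.symm hd0))]
    have key := normSq_id (-ζ) w
    rw [show (1 : ℂ) - conj w * -ζ = 1 + conj w * ζ by ring,
      show -ζ - w = -(ζ + w) by ring, normSq_neg, normSq_neg] at key
    nlinarith [mul_pos (sub_pos.2 hwns) (sub_pos.2 (normSq_lt_one hζ))]
  have hφdiff : DifferentiableOn ℂ φ unitDisk := by
    apply DifferentiableOn.div
    · fun_prop
    · fun_prop
    · exact hden
  set B := h w with hB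
  set G : ℂ → ℂ := fun ζ => (h (φ ζ) - B) / (h (φ ζ) + conj B) with hG
  have hGden : ∀ ζ ∈ unitDisk, h (φ ζ) + conj B ≠ 0 := by
    intro ζ hζ h0
    have h1 : 0 < (h (φ ζ)).re := hre _ (hφmem ζ hζ)
    have h2 : 0 < B.re := hre _ hw
    have h3 : (h (φ ζ) + conj B).re = (h (φ ζ)).re + B.re := by
      simp [Complex.add_re, Complex.conj_re]
    rw [h0] at h3; simp at h3; linarith
  have hGdiff : DifferentiableOn ℂ G unitDisk := by
    apply DifferentiableOn.div
    · exact ((hd.comp hφdiff (fun ζ hζ => hφmem ζ hζ)).sub (differentiableOn_const _))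
    · exact ((hd.comp hφdiff (fun ζ hζ => hφmem ζ hζ)).add (differentiableOn_const _))
    · exact hGden
  have hGmaps : ∀ ζ ∈ unitDisk, G ζ ∈ unitDisk := by
    intro ζ hζ
    have h1 : 0 < (h (φ ζ)).re := hre _ (hφmem ζ hζ)
    have h2 : 0 < B.re := hre _ hw
    have hd0 : normSq (h (φ ζ) + conj B) ≠ 0 := (normSq_pos.2 (hGden ζ hζ)).ne'
    apply mem_of_normSq_lt
    rw [hG]; simp only
    rw [map_div₀, div_lt_one (lt_of_le_of_ne (normSq_nonneg _) (Ne.symm hd0))]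
    have key := normSq_id2 (h (φ ζ)) B
    nlinarith
  have hG0 : G 0 = 0 := by
    have h1 : φ 0 = w := by rw [hφ]; simp
    rw [hG]; simp only [h1]
    simp [hB]
  by_cases hzw : z = w
  · subst hzw; simp [hB, normSq_nonneg, mul_nonneg]
  have hd1 : (1:ℂ) - conj w * z ≠ 0 := by
    intro h0
    have h3 : normSq (conj w * z) < 1 := by
      rw [map_mul, normSq_conj]; nlinarith [normSq_lt_one hz, normSq_nonneg w, normSq_nonneg z]
    have h2 : conj w * z = 1 := by linear_combination -h0
    rw [h2, normSq_one] at h3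
    exact lt_irrefl 1 h3
  set ζ₀ : ℂ := (z - w) / (1 - conj w * z) with hζ₀
  have hζ₀mem : ζ₀ ∈ unitDisk := by
    apply mem_of_normSq_lt
    rw [hζ₀, map_div₀, div_lt_one (normSq_pos.2 hd1)]
    have key := normSq_id z w
    nlinarith [mul_pos (sub_pos.2 hwns) (sub_pos.2 (normSq_lt_one hz))]
  have hφζ₀ : φ ζ₀ = z := by
    have hden2 : (1:ℂ) + conj w * ζ₀ ≠ 0 := hden ζ₀ hζ₀mem
    rw [hφ]; simp only
    rw [div_eq_iff hden2, hζ₀]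
    rw [div_add' _ _ _ hd1, mul_div_assoc', one_add_div hd1, mul_div_assoc', div_left_inj' hd1]
    ring
  have hschwarz : ‖G ζ₀‖ ≤ ‖ζ₀‖ := by
    apply Complex.norm_le_norm_of_mapsTo_ball
      (R := 1) (f := G) (by rw [← unitDisk_eq]; exact hGdiff)
      (by rw [← unitDisk_eq]; intro x hx; exact ball_subset_closedBall (by rw [← unitDisk_eq]; exact hGmaps x hx)) hG0
    have h1 := hζ₀mem; simpa [unitDisk] using h1
  have hGval : G ζ₀ = (h z - B) / (h z + conj B) := by rw [hG]; simp only [hφζ₀]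
  rw [hGval] at hschwarz
  have hden3 : h z + conj B ≠ 0 := by
    have h1 := hGden ζ₀ hζ₀mem; rwa [hφζ₀] at h1
  have h1 := hschwarz
  rw [hζ₀, norm_div, norm_div,
    div_le_div_iff₀ (norm_pos_iff.2 hden3) (norm_pos_iff.2 hd1)] at h1
  have h2 := pow_le_pow_left₀ (by positivity) h1 2
  calc normSq (h z - B) * normSq (1 - conj w * z)
      = (‖h z - B‖ * ‖1 - conj w * z‖)^2 := by
        rw [mul_pow, Complex.sq_norm, Complex.sq_norm]
    _ ≤ (‖z - w‖ * ‖h z + conj B‖)^2 := h2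
    _ = normSq (z - w) * normSq (h z + conj B) := by
        rw [mul_pow, Complex.sq_norm, Complex.sq_norm]

lemma re_pos_or_const (h : ℂ → ℂ) (hd : DifferentiableOn ℂ h unitDisk)
    (hre : ∀ z ∈ unitDisk, 0 ≤ (h z).re) :
    (∃ c, ∀ z ∈ unitDisk, h z = c) ∨ ∀ z ∈ unitDisk, 0 < (h z).re := by
  rcases (hd.analyticOnNhd isOpen_unitDisk).is_constant_or_isOpen preconn_unitDisk with hc | ho
  · exact Or.inl hc
  · right
    intro z hz
    rcases lt_or_eq_of_le (hre z hz) with h1 | h1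
    · exact h1
    · exfalso
      have himg : IsOpen (h '' unitDisk) := ho unitDisk subset_rfl isOpen_unitDisk
      obtain ⟨ε, hε, hball⟩ := Metric.isOpen_iff.1 himg (h z) ⟨z, hz, rfl⟩
      have hmem : h z - (ε/2 : ℝ) ∈ Metric.ball (h z) ε := by
        simp only [Metric.mem_ball, Complex.dist_eq]
        rw [show h z - (ε/2:ℝ) - h z = -(ε/2:ℝ) by ring]
        rw [norm_neg, Complex.norm_real, Real.norm_eq_abs, abs_of_pos (by linarith)]
        linarith
      obtain ⟨z₂, hz₂, hz₂e⟩ := hball hmem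
      have := hre z₂ hz₂
      rw [hz₂e] at this
      simp only [Complex.sub_re, Complex.ofReal_re] at this
      linarith

lemma zero_on_disk (γ : ℂ → ℂ) (hd : DifferentiableOn ℂ γ unitDisk)
    (hre : ∀ z ∈ unitDisk, 0 ≤ (γ z).re)
    (hlim : Tendsto (fun t : ℝ => γ (1 - (t:ℂ)) / (t:ℂ)) (nhdsWithin 0 (Set.Ioi 0)) (nhds 0)) :
    ∀ z ∈ unitDisk, γ z = 0 := by
  have hmem01 : ∀ t : ℝ, t ∈ Set.Ioo (0:ℝ) 1 → (1 - (t:ℂ)) ∈ unitDisk := by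
    intro t ht
    simp only [unitDisk, mem_setOf_eq]
    rw [show (1 - (t:ℂ)) = ((1 - t : ℝ) : ℂ) by push_cast; ring, Complex.norm_real, Real.norm_eq_abs]
    rw [abs_of_pos (by linarith [ht.2])]
    linarith [ht.1]
  have hev : ∀ᶠ t : ℝ in nhdsWithin 0 (Set.Ioi 0), t ∈ Set.Ioo (0:ℝ) 1 := by
    filter_upwards [Ioo_mem_nhdsGT_of_mem (Set.left_mem_Ico.mpr one_pos)] with t ht
    exact ht
  rcases re_pos_or_const γ hd hre with ⟨c, hc⟩ | hpos
  · have h1 : Tendsto (fun t : ℝ => (t:ℂ) * (γ (1 - (t:ℂ)) / (t:ℂ))) (nhdsWithin 0 (Set.Ioi 0))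
        (nhds 0) := by
      have h2 : Tendsto (fun t : ℝ => (t:ℂ)) (nhdsWithin 0 (Set.Ioi 0)) (nhds 0) := by
        exact (Complex.continuous_ofReal.tendsto' 0 0 rfl).mono_left nhdsWithin_le_nhds
      simpa using h2.mul hlim
    have h3 : Tendsto (fun _ : ℝ => c) (nhdsWithin 0 (Set.Ioi 0)) (nhds 0) := by
      apply h1.congr'
      filter_upwards [hev] with t ht
      rw [hc _ (hmem01 t ht)]
      field_simp [Complex.ofReal_ne_zero.2 (ne_of_gt ht.1)]
    have hc0 : c = 0 := tendsto_nhds_unique tendsto_const_nhds h3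
    intro z hz; rw [hc z hz, hc0]
  · exfalso
    have h0mem : (0:ℂ) ∈ unitDisk := by simp [unitDisk]
    -- Schwarz-Pick between 1-t and 0
    have key : ∀ t : ℝ, t ∈ Set.Ioo (0:ℝ) 1 →
        ‖γ 0‖ ≤ 4 * ‖γ (1 - (t:ℂ)) / (t:ℂ)‖ := by
      intro t ht
      set r : ℂ := 1 - (t:ℂ) with hr
      have hrmem : r ∈ unitDisk := hmem01 t ht
      have hsp := schwarz_pick γ hd hpos hrmem h0mem
      simp only [map_zero, zero_mul, sub_zero, normSq_one, mul_one] at hsp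
      have habs : ‖γ r - γ 0‖ ≤ ‖r‖ * ‖γ r + conj (γ 0)‖ := by
        apply le_of_pow_le_pow_left₀ two_ne_zero (by positivity)
        rw [mul_pow, Complex.sq_norm, Complex.sq_norm, Complex.sq_norm]
        exact hsp
      have hrabs : ‖r‖ ≤ 1 - t/2 := by
        rw [hr, show (1 - (t:ℂ)) = ((1 - t : ℝ) : ℂ) by push_cast; ring, Complex.norm_real, Real.norm_eq_abs,
          abs_of_pos (by linarith [ht.2])]
        linarith [ht.1]
      have e1 : ‖γ 0‖ ≤ ‖γ r - γ 0‖ + ‖γ r‖ := by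
        have := norm_sub_le (γ r) (γ 0)
        calc ‖γ 0‖ = ‖-(γ r - γ 0) + γ r‖ := by ring_nf
          _ ≤ ‖-(γ r - γ 0)‖ + ‖γ r‖ := norm_add_le _ _
          _ = ‖γ r - γ 0‖ + ‖γ r‖ := by rw [norm_neg]
      have e2 : ‖γ r + conj (γ 0)‖ ≤ ‖γ r‖ + ‖γ 0‖ := by
        calc ‖γ r + conj (γ 0)‖ ≤ ‖γ r‖ + ‖conj (γ 0)‖ :=
            norm_add_le _ _
          _ = ‖γ r‖ + ‖γ 0‖ := by rw [Complex.norm_conj]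
      have e3 : ‖γ 0‖ * (t/2) ≤ 2 * ‖γ r‖ := by
        nlinarith [norm_nonneg (γ r), norm_nonneg (γ 0),
          norm_nonneg (γ r + conj (γ 0)), norm_nonneg (γ r - γ 0), ht.1, ht.2]
      have e4 : ‖γ r / (t:ℂ)‖ = ‖γ r‖ / t := by
        rw [norm_div, Complex.norm_real, Real.norm_eq_abs, abs_of_pos ht.1]
      rw [e4, mul_div_assoc', le_div_iff₀ ht.1]
      nlinarith [e3, norm_nonneg (γ r), ht.1, ht.2]
    have hlim2 : Tendsto (fun t : ℝ => 4 * ‖γ (1 - (t:ℂ)) / (t:ℂ)‖)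
        (nhdsWithin 0 (Set.Ioi 0)) (nhds 0) := by
      have := hlim.norm
      simp only [norm_zero] at this
      simpa using this.const_mul 4
    have hfin : ‖γ 0‖ ≤ 0 := by
      apply ge_of_tendsto hlim2
      filter_upwards [hev] with t ht
      exact key t ht
    have hγ0 : γ 0 = 0 := norm_eq_zero.1 (le_antisymm hfin (norm_nonneg _))
    have h5 := hpos 0 h0mem
    rw [hγ0] at h5
    simp at h5

lemma julia (h : ℂ → ℂ) (hd : DifferentiableOn ℂ h unitDisk)
    (hre : ∀ z ∈ unitDisk, 0 ≤ (h z).re) (A : ℝ) (hA : 0 < A)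
    (hlim : Tendsto (fun t : ℝ => (t:ℂ) * h (1 - (t:ℂ))) (nhdsWithin 0 (Set.Ioi 0))
      (nhds ((2*A : ℝ) : ℂ))) :
    ∀ z ∈ unitDisk, A * ((1 - normSq z) / normSq (1 - z)) ≤ (h z).re := by
  have hmem01 : ∀ t : ℝ, t ∈ Set.Ioo (0:ℝ) 1 → (1 - (t:ℂ)) ∈ unitDisk := by
    intro t ht
    simp only [unitDisk, mem_setOf_eq]
    rw [show (1 - (t:ℂ)) = ((1 - t : ℝ) : ℂ) by push_cast; ring, Complex.norm_real, Real.norm_eq_abs]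
    rw [abs_of_pos (by linarith [ht.2])]
    linarith [ht.1]
  have hev : ∀ᶠ t : ℝ in nhdsWithin 0 (Set.Ioi 0), t ∈ Set.Ioo (0:ℝ) 1 := by
    filter_upwards [Ioo_mem_nhdsGT_of_mem (Set.left_mem_Ico.mpr one_pos)] with t ht
    exact ht
  rcases re_pos_or_const h hd hre with ⟨c, hc⟩ | hpos
  · exfalso
    have h1 : Tendsto (fun t : ℝ => (t:ℂ) * h (1 - (t:ℂ))) (nhdsWithin 0 (Set.Ioi 0))
        (nhds 0) := by
      have h2 : Tendsto (fun t : ℝ => (t:ℂ) * c) (nhdsWithin 0 (Set.Ioi 0)) (nhds 0) := by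
        have h3 : Tendsto (fun t : ℝ => (t:ℂ)) (nhdsWithin 0 (Set.Ioi 0)) (nhds 0) :=
          (Complex.continuous_ofReal.tendsto' 0 0 rfl).mono_left nhdsWithin_le_nhds
        simpa using h3.mul_const c
      apply h2.congr'
      filter_upwards [hev] with t ht
      rw [hc _ (hmem01 t ht)]
    have h4 : ((2*A : ℝ) : ℂ) = 0 := tendsto_nhds_unique hlim h1
    rw [Complex.ofReal_eq_zero] at h4
    linarith
  · intro z hz
    have hz1 : (1:ℂ) - z ≠ 0 := one_sub_ne z hz
    have hNz : 0 < normSq (1 - z) := normSq_pos.2 hz1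
    have hnsz : normSq z < 1 := normSq_lt_one hz
    set K : ℝ := (1 - normSq z) / normSq (1 - z) with hK
    -- eventual inequality
    have key : ∀ t : ℝ, t ∈ Set.Ioo (0:ℝ) 1 →
        ((2 - t) * (1 - normSq z) / normSq (1 - (1 - (t:ℂ))*z)) * normSq ((t:ℂ) * h (1 - (t:ℂ)))
          ≤ 2 * ((h z) * conj ((t:ℂ) * h (1 - (t:ℂ)))).re
            + 2 * (normSq (z - (1 - (t:ℂ))) / normSq (1 - (1 - (t:ℂ))*z))
              * ((h z) * ((t:ℂ) * h (1 - (t:ℂ)))).re := by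
      intro t ht
      set r : ℂ := 1 - (t:ℂ) with hr
      have hrmem : r ∈ unitDisk := hmem01 t ht
      have hconjr : conj r = r := by
        rw [hr, show (1 - (t:ℂ)) = ((1 - t : ℝ) : ℂ) by push_cast; ring, Complex.conj_ofReal]
      have hN : 0 < normSq (1 - r * z) := by
        apply normSq_pos.2
        intro h0
        have h3 : normSq (r * z) < 1 := by
          rw [map_mul]; nlinarith [normSq_lt_one hrmem, normSq_nonneg r, normSq_nonneg z]
        have h2 : r * z = 1 := by linear_combination -h0
        rw [h2, normSq_one] at h3
        exact lt_irrefl 1 h3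
      have hsp := schwarz_pick h hd hpos hz hrmem
      rw [hconjr] at hsp
      -- divide through and expand
      have hid := normSq_id z r
      rw [hconjr] at hid
      have hnsr : normSq r = (1-t)^2 := by
        rw [hr, show (1 - (t:ℂ)) = ((1 - t : ℝ) : ℂ) by push_cast; ring, normSq_ofReal]; ring
      have hAB1 : normSq (h z - h r) = normSq (h z) + normSq (h r)
          - 2 * ((h z) * conj (h r)).re := Complex.normSq_sub _ _
      have hAB2 : normSq (h z + conj (h r)) = normSq (h z) + normSq (h r)
          + 2 * ((h z) * (h r)).re := by
        rw [Complex.normSq_add, normSq_conj, Complex.conj_conj]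
      have htB : normSq ((t:ℂ) * h r) = t^2 * normSq (h r) := by
        rw [map_mul, Complex.normSq_ofReal]; ring
      have hre1 : ((h z) * conj ((t:ℂ) * h r)).re = t * ((h z) * conj (h r)).re := by
        rw [map_mul, Complex.conj_ofReal, mul_comm ((t:ℂ)) (conj (h r)), ← mul_assoc]
        rw [mul_comm (h z * conj (h r)) ((t:ℂ))]
        exact Complex.re_ofReal_mul _ _
      have hre2 : ((h z) * ((t:ℂ) * h r)).re = t * ((h z) * (h r)).re := by
        rw [mul_comm ((t:ℂ)) (h r), ← mul_assoc, mul_comm (h z * h r) ((t:ℂ))]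
        exact Complex.re_ofReal_mul _ _
      rw [htB, hre1, hre2]
      -- goal is now purely real algebraic; set variables
      set nsA := normSq (h z)
      set nsB := normSq (h r)
      set X := ((h z) * conj (h r)).re
      set Y := ((h z) * (h r)).re
      set M := normSq (z - r)
      set N := normSq (1 - r * z)
      -- hsp : (nsA + nsB - 2X) * N ≤ M * (nsA + nsB + 2Y)
      rw [hAB1, hAB2] at hsp
      -- hid : N - M = (1 - normSq r)*(1 - normSq z)
      have hNM : 0 ≤ N - M := by
        rw [hid, hnsr]
        nlinarith [ht.1, ht.2, sub_pos.2 hnsz, mul_pos (show (0:ℝ) < 1 - (1-t)^2 by nlinarith [ht.1, ht.2]) (sub_pos.2 hnsz)]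
      have hM0 : 0 ≤ M := normSq_nonneg _
      have hnsA0 : 0 ≤ nsA := normSq_nonneg _
      have hnsB0 : 0 ≤ nsB := normSq_nonneg _
      have step : (N - M)*nsB ≤ 2*X*N + 2*M*Y := by nlinarith [hsp, hNM, hnsA0]
      have e5 : N - M = (2*t - t^2)*(1 - normSq z) := by rw [hid, hnsr]; ring
      calc ((2 - t) * (1 - normSq z) / N) * (t^2*nsB)
          = (t*((N - M)*nsB))/N := by rw [e5]; ring
        _ ≤ (t*(2*X*N + 2*M*Y))/N := by
            exact (div_le_div_iff_of_pos_right hN).2 (mul_le_mul_of_nonneg_left step (le_of_lt ht.1))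
        _ = 2*(t*X) + 2*(M/N)*(t*Y) := by field_simp
    -- pass to the limit
    set W : ℂ := ((2*A : ℝ) : ℂ) with hW
    have t2 : Tendsto (fun t : ℝ => normSq (1 - (1 - (t:ℂ))*z)) (nhdsWithin 0 (Set.Ioi 0))
        (nhds (normSq (1 - z))) := by
      have c2 : Continuous (fun t : ℝ => normSq (1 - (1 - (t:ℂ))*z)) :=
        Complex.continuous_normSq.comp
          (continuous_const.sub ((continuous_const.sub Complex.continuous_ofReal).mul
            continuous_const))
      exact (c2.tendsto' 0 _ (by norm_num)).mono_left nhdsWithin_le_nhds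
    have t1 : Tendsto (fun t : ℝ => (2 - t) * (1 - normSq z)) (nhdsWithin 0 (Set.Ioi 0))
        (nhds (2 * (1 - normSq z))) := by
      have c1 : Continuous (fun t : ℝ => (2 - t) * (1 - normSq z)) :=
        (continuous_const.sub continuous_id).mul continuous_const
      exact (c1.tendsto' 0 _ (by norm_num)).mono_left nhdsWithin_le_nhds
    have t3 : Tendsto (fun t : ℝ => normSq ((t:ℂ) * h (1 - (t:ℂ)))) (nhdsWithin 0 (Set.Ioi 0))
        (nhds (normSq W)) := (Complex.continuous_normSq.tendsto W).comp hlim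
    have hL : Tendsto (fun t : ℝ =>
        ((2 - t) * (1 - normSq z) / normSq (1 - (1 - (t:ℂ))*z)) * normSq ((t:ℂ) * h (1 - (t:ℂ))))
        (nhdsWithin 0 (Set.Ioi 0))
        (nhds ((2 * (1 - normSq z) / normSq (1 - z)) * normSq W)) :=
      (t1.div t2 hNz.ne').mul t3
    have u0 : Tendsto (fun t : ℝ => (h z) * conj ((t:ℂ) * h (1 - (t:ℂ))))
        (nhdsWithin 0 (Set.Ioi 0)) (nhds ((h z) * conj W)) :=
      tendsto_const_nhds.mul ((Complex.continuous_conj.tendsto W).comp hlim)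
    have u1 : Tendsto (fun t : ℝ => ((h z) * conj ((t:ℂ) * h (1 - (t:ℂ)))).re)
        (nhdsWithin 0 (Set.Ioi 0)) (nhds (((h z) * conj W).re)) :=
      (Complex.continuous_re.tendsto _).comp u0
    have u3 : Tendsto (fun t : ℝ => ((h z) * ((t:ℂ) * h (1 - (t:ℂ)))).re)
        (nhdsWithin 0 (Set.Ioi 0)) (nhds (((h z) * W).re)) :=
      (Complex.continuous_re.tendsto _).comp (tendsto_const_nhds.mul hlim)
    have u2 : Tendsto (fun t : ℝ => normSq (z - (1 - (t:ℂ))) / normSq (1 - (1 - (t:ℂ))*z))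
        (nhdsWithin 0 (Set.Ioi 0)) (nhds 1) := by
      have c4 : Continuous (fun t : ℝ => normSq (z - (1 - (t:ℂ)))) :=
        Complex.continuous_normSq.comp
          (continuous_const.sub (continuous_const.sub Complex.continuous_ofReal))
      have t4 : Tendsto (fun t : ℝ => normSq (z - (1 - (t:ℂ)))) (nhdsWithin 0 (Set.Ioi 0))
          (nhds (normSq (1 - z))) := by
        have : normSq (z - 1) = normSq (1 - z) := by
          rw [show z - 1 = -(1-z) by ring, normSq_neg]
        exact (c4.tendsto' 0 _ (by norm_num [this])).mono_left nhdsWithin_le_nhds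
      have := t4.div t2 hNz.ne'
      rwa [div_self hNz.ne'] at this
    have hR : Tendsto (fun t : ℝ =>
        2 * ((h z) * conj ((t:ℂ) * h (1 - (t:ℂ)))).re
          + 2 * (normSq (z - (1 - (t:ℂ))) / normSq (1 - (1 - (t:ℂ))*z))
            * ((h z) * ((t:ℂ) * h (1 - (t:ℂ)))).re)
        (nhdsWithin 0 (Set.Ioi 0))
        (nhds (2 * ((h z) * conj W).re + 2 * 1 * ((h z) * W).re)) :=
      (tendsto_const_nhds.mul u1).add (((tendsto_const_nhds.mul u2)).mul u3)
    have final : (2 * (1 - normSq z) / normSq (1 - z)) * normSq W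
        ≤ 2 * ((h z) * conj W).re + 2 * 1 * ((h z) * W).re := by
      apply le_of_tendsto_of_tendsto hL hR
      filter_upwards [hev] with t ht
      exact key t ht
    have hWre : ((h z) * W).re = (2*A) * (h z).re := by
      rw [hW, mul_comm]; exact Complex.re_ofReal_mul _ _
    have hWconj : conj W = W := by rw [hW, Complex.conj_ofReal]
    have hWns : normSq W = (2*A)*(2*A) := by rw [hW, normSq_ofReal]
    rw [hWconj, hWre, hWns] at final
    rw [hK]
    rw [mul_div_assoc] at final
    nlinarith [final, hA]

lemma charge_lim (p : ℂ → ℂ) (a b : ℂ) (γ : ℂ → ℂ)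
    (hrep : ∀ z ∈ unitDisk, p z = a * ((1 + z) / (1 - z)) + b + γ z)
    (hγ : AngularLimAt (fun z => γ z / (z - 1)) 1 0) :
    AngularLimAt (fun z => (1 - z) * p z) 1 (2 * a) := by
  intro k hk
  have hγk := hγ k hk
  have t1 : Tendsto (fun z : ℂ => a * (1 + z) + (1 - z) * b) (nhdsWithin 1 (stolzAngle 1 k))
      (nhds (2 * a)) := by
    have c1 : Continuous (fun z : ℂ => a * (1 + z) + (1 - z) * b) := by fun_prop
    exact (c1.tendsto' 1 _ (by ring)).mono_left nhdsWithin_le_nhds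
  have t2 : Tendsto (fun z : ℂ => (z - 1)^2) (nhdsWithin 1 (stolzAngle 1 k)) (nhds 0) := by
    have c2 : Continuous (fun z : ℂ => (z - 1)^2) := by fun_prop
    exact (c2.tendsto' 1 _ (by ring)).mono_left nhdsWithin_le_nhds
  have t3 : Tendsto (fun z : ℂ => a * (1 + z) + (1 - z) * b - (z - 1)^2 * (γ z / (z - 1)))
      (nhdsWithin 1 (stolzAngle 1 k)) (nhds (2 * a)) := by
    have := t1.sub (t2.mul hγk)
    simpa using this
  apply t3.congr'
  filter_upwards [eventually_mem_nhdsWithin] with z hz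
  have hzd : z ∈ unitDisk := hz.1
  have hz1 : (1:ℂ) - z ≠ 0 := one_sub_ne z hzd
  have hz1' : z - 1 ≠ 0 := by intro h0; apply hz1; linear_combination -h0
  rw [hrep z hzd]
  field_simp
  ring

lemma radial_tendsto (k : ℝ) (hk : 1 < k) :
    Tendsto (fun t : ℝ => 1 - (t:ℂ)) (nhdsWithin 0 (Set.Ioi 0))
      (nhdsWithin 1 (stolzAngle 1 k)) := by
  rw [tendsto_nhdsWithin_iff]
  constructor
  · have c : Continuous (fun t : ℝ => 1 - (t:ℂ)) := by fun_prop
    exact (c.tendsto' 0 _ (by norm_num)).mono_left nhdsWithin_le_nhds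
  · filter_upwards [Ioo_mem_nhdsGT_of_mem (Set.left_mem_Ico.mpr one_pos)] with t ht
    have habs : ‖1 - (t:ℂ)‖ = 1 - t := by
      rw [show (1 - (t:ℂ)) = ((1 - t : ℝ) : ℂ) by push_cast; ring, Complex.norm_real, Real.norm_eq_abs,
        abs_of_pos (by linarith [ht.2])]
    constructor
    · simp only [unitDisk, mem_setOf_eq, habs]; linarith [ht.1]
    · rw [habs]
      rw [show (1 - (t:ℂ)) - 1 = ((-t : ℝ) : ℂ) by push_cast; ring, Complex.norm_real, Real.norm_eq_abs,
        abs_of_neg (by linarith [ht.1])]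
      have : 1 - (1 - t) = t := by ring
      rw [this]
      nlinarith [ht.1, hk]

lemma dir_tendsto (u : ℂ) (hu : normSq u = 1) (hur : 0 < u.re) :
    Tendsto (fun t : ℝ => 1 - (t:ℂ) * u) (nhdsWithin 0 (Set.Ioi 0))
      (nhdsWithin 1 (stolzAngle 1 (3 / u.re))) := by
  have hure : u.re ≤ 1 := by nlinarith [normSq_apply u, sq_nonneg u.im]
  rw [tendsto_nhdsWithin_iff]
  constructor
  · have c : Continuous (fun t : ℝ => 1 - (t:ℂ) * u) := by fun_prop
    exact (c.tendsto' 0 _ (by norm_num)).mono_left nhdsWithin_le_nhds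
  · have hmem : Set.Ioo (0:ℝ) u.re ∈ nhdsWithin 0 (Set.Ioi 0) :=
      Ioo_mem_nhdsGT_of_mem (Set.left_mem_Ico.mpr hur)
    filter_upwards [hmem] with t ht
    set z : ℂ := 1 - (t:ℂ) * u with hz
    have hns : normSq z = 1 - 2*t*u.re + t^2 := by
      rw [hz]
      simp only [normSq_apply, Complex.sub_re, Complex.sub_im, Complex.mul_re, Complex.mul_im,
        Complex.one_re, Complex.one_im, Complex.ofReal_re, Complex.ofReal_im]
      rw [normSq_apply] at hu
      nlinarith [hu]
    have hnslt : normSq z ≤ 1 - t * u.re := by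
      rw [hns]; nlinarith [ht.1, ht.2]
    set s := ‖z‖ with hs
    have hs0 : 0 ≤ s := norm_nonneg z
    have hssq : s^2 = normSq z := Complex.sq_norm z
    have hslt : s < 1 := by nlinarith [ht.1, ht.2, mul_pos ht.1 hur]
    have h1s : t * u.re / 2 ≤ 1 - s := by nlinarith [ht.1, ht.2, mul_pos ht.1 hur]
    constructor
    · exact hslt
    · have habs : ‖z - 1‖ = t := by
        rw [hz, show (1 - (t:ℂ)*u) - 1 = -((t:ℂ)*u) by ring, norm_neg, norm_mul,
          Complex.norm_real, Real.norm_eq_abs, abs_of_pos ht.1]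
        have : ‖u‖ = 1 := by
          rw [← Complex.sq_norm] at hu
          nlinarith [norm_nonneg u]
        rw [this, mul_one]
      rw [habs, div_mul_eq_mul_div, lt_div_iff₀ hur]
      nlinarith [mul_pos ht.1 hur, h1s]

lemma dir_nonneg (p : ℂ → ℂ) (hre : ∀ z ∈ unitDisk, 0 ≤ (p z).re) (L : ℂ)
    (hch : AngularLimAt (fun z => (1 - z) * p z) 1 L)
    (u : ℂ) (hu : normSq u = 1) (hur : 0 < u.re) :
    0 ≤ (conj u * L).re := by
  have hure : u.re ≤ 1 := by nlinarith [normSq_apply u, sq_nonneg u.im]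
  have hk : 1 < 3 / u.re := by rw [lt_div_iff₀ hur]; nlinarith
  have hP := dir_tendsto u hu hur
  have comp : Tendsto (fun t : ℝ => (1 - (1 - (t:ℂ)*u)) * p (1 - (t:ℂ)*u))
      (nhdsWithin 0 (Set.Ioi 0)) (nhds L) := (hch (3/u.re) hk).comp hP
  have comp2 : Tendsto (fun t : ℝ => (conj u * ((1 - (1 - (t:ℂ)*u)) * p (1 - (t:ℂ)*u))).re)
      (nhdsWithin 0 (Set.Ioi 0)) (nhds ((conj u * L).re)) :=
    (Complex.continuous_re.tendsto _).comp (tendsto_const_nhds.mul comp)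
  apply ge_of_tendsto comp2
  have hev1 : ∀ᶠ t : ℝ in nhdsWithin 0 (Set.Ioi 0), (1 - (t:ℂ)*u) ∈ stolzAngle 1 (3/u.re) :=
    hP.eventually eventually_mem_nhdsWithin
  filter_upwards [hev1, self_mem_nhdsWithin] with t hts (htp : 0 < t)
  have hzd : (1 - (t:ℂ)*u) ∈ unitDisk := hts.1
  have huu : conj u * u = 1 := by
    rw [mul_comm, Complex.mul_conj, hu]; norm_num
  have e : conj u * ((1 - (1 - (t:ℂ)*u)) * p (1 - (t:ℂ)*u)) = (t:ℂ) * p (1 - (t:ℂ)*u) := by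
    linear_combination ((t:ℂ) * p (1 - (t:ℂ)*u)) * huu
  rw [e, Complex.re_ofReal_mul]
  exact mul_nonneg (le_of_lt htp) (hre _ hzd)

lemma charge_real (p : ℂ → ℂ) (hre : ∀ z ∈ unitDisk, 0 ≤ (p z).re) (L : ℂ)
    (hch : AngularLimAt (fun z => (1 - z) * p z) 1 L) :
    L.im = 0 ∧ 0 ≤ L.re := by
  have hre0 : 0 ≤ L.re := by
    have h1 := dir_nonneg p hre L hch 1 (by simp) (by simp)
    simpa using h1
  set v : ℝ → ℂ := fun θ => (Real.cos θ : ℂ) + (Real.sin θ : ℂ)*Complex.I with hv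
  have hvns : ∀ θ : ℝ, normSq (v θ) = 1 := by
    intro θ
    simp only [hv, normSq_apply, Complex.add_re, Complex.add_im, Complex.mul_re, Complex.mul_im,
      Complex.ofReal_re, Complex.ofReal_im, Complex.I_re, Complex.I_im]
    nlinarith [Real.sin_sq_add_cos_sq θ]
  have hvre : ∀ θ : ℝ, (v θ).re = Real.cos θ := by
    intro θ
    simp only [hv, Complex.add_re, Complex.mul_re, Complex.I_re, Complex.I_im,
      Complex.ofReal_re, Complex.ofReal_im]
    ring
  set g : ℝ → ℝ := fun θ => (conj (v θ) * L).re with hg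
  have hgc : Continuous g := by
    apply Complex.continuous_re.comp
    apply Continuous.mul ?_ continuous_const
    apply Complex.continuous_conj.comp
    fun_prop
  have hgnn : ∀ θ : ℝ, θ ∈ Set.Ioo (-(Real.pi/2)) (Real.pi/2) → 0 ≤ g θ := by
    intro θ hθ
    apply dir_nonneg p hre L hch (v θ) (hvns θ)
    rw [hvre θ]
    exact Real.cos_pos_of_mem_Ioo hθ
  have hpi : -(Real.pi/2) < Real.pi/2 := by linarith [Real.pi_pos]
  have him1 : 0 ≤ g (Real.pi/2) := by
    apply ge_of_tendsto ((hgc.tendsto _).mono_left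
      (nhdsWithin_le_nhds (s := Set.Iio (Real.pi/2))))
    filter_upwards [Ioo_mem_nhdsLT_of_mem (Set.right_mem_Ioc.mpr hpi)] with θ hθ
    exact hgnn θ hθ
  have him2 : 0 ≤ g (-(Real.pi/2)) := by
    apply ge_of_tendsto ((hgc.tendsto _).mono_left
      (nhdsWithin_le_nhds (s := Set.Ioi (-(Real.pi/2)))))
    filter_upwards [Ioo_mem_nhdsGT_of_mem (Set.left_mem_Ico.mpr hpi)] with θ hθ
    exact hgnn θ hθ
  have hval1 : g (Real.pi/2) = L.im := by
    rw [hg]; simp only [hv, Real.cos_pi_div_two, Real.sin_pi_div_two]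
    simp [Complex.mul_re]
  have hval2 : g (-(Real.pi/2)) = -L.im := by
    rw [hg]; simp only [hv, Real.cos_neg, Real.sin_neg, Real.cos_pi_div_two,
      Real.sin_pi_div_two]
    simp [Complex.mul_re]
  refine ⟨by rw [hval1] at him1; rw [hval2] at him2; linarith, hre0⟩

theorem stmt16 (p : ℂ → ℂ) (hp : DifferentiableOn ℂ p unitDisk)
    (hre : ∀ z ∈ unitDisk, 0 ≤ (p z).re)
    (a b : ℂ) (γ : ℂ → ℂ)
    (hrep : ∀ z ∈ unitDisk, p z = a * ((1 + z) / (1 - z)) + b + γ z)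
    (hγ : AngularLimAt (fun z => γ z / (z - 1)) 1 0) :
    (a.im = 0 ∧ 0 ≤ a.re ∧ AngularLimAt (fun z => (1 - z) * p z) 1 (2 * a)) ∧
    ((∀ z ∈ unitDisk, γ z = 0) ↔ (0 ≤ b.re ∧ ∀ z ∈ unitDisk, b.re ≤ (p z).re)) := by
  have hcharge := charge_lim p a b γ hrep hγ
  obtain ⟨haim2, hare2⟩ := charge_real p hre (2*a) hcharge
  have haim : a.im = 0 := by
    rw [Complex.mul_im] at haim2
    simp at haim2
    exact haim2
  have hare : 0 ≤ a.re := by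
    rw [Complex.mul_re] at hare2
    simp at hare2
    linarith
  have hev01 : ∀ᶠ t : ℝ in nhdsWithin 0 (Set.Ioi 0), t ∈ Set.Ioo (0:ℝ) 1 := by
    filter_upwards [Ioo_mem_nhdsGT_of_mem (Set.left_mem_Ico.mpr one_pos)] with t ht
    exact ht
  refine ⟨⟨haim, hare, hcharge⟩, ?_⟩
  constructor
  · -- γ ≡ 0 → Harnack-type conclusion
    intro hγ0
    have hpre : ∀ z ∈ unitDisk, (p z).re
        = a.re * ((1 - normSq z) / normSq (1 - z)) + b.re := by
      intro z hz
      have h3 := hrep z hz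
      rw [hγ0 z hz, add_zero] at h3
      rw [h3, Complex.add_re, Complex.mul_re, haim, kernel_re z hz]
      ring
    constructor
    · -- 0 ≤ b.re
      have hlim1 : Tendsto (fun t : ℝ => 1 - normSq ((t:ℂ) - 1)) (nhdsWithin 0 (Set.Ioi 0))
          (nhds 0) := by
        have c : Continuous (fun t : ℝ => 1 - normSq ((t:ℂ) - 1)) :=
          continuous_const.sub (Complex.continuous_normSq.comp
            (Complex.continuous_ofReal.sub continuous_const))
        exact (c.tendsto' 0 _ (by norm_num [normSq_apply])).mono_left nhdsWithin_le_nhds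
      have hlim2 : Tendsto (fun t : ℝ => normSq (1 - ((t:ℂ) - 1))) (nhdsWithin 0 (Set.Ioi 0))
          (nhds 4) := by
        have c : Continuous (fun t : ℝ => normSq (1 - ((t:ℂ) - 1))) :=
          Complex.continuous_normSq.comp
            (continuous_const.sub (Complex.continuous_ofReal.sub continuous_const))
        exact (c.tendsto' 0 _ (by norm_num [normSq_apply])).mono_left nhdsWithin_le_nhds
      have hlimb : Tendsto (fun t : ℝ =>
          a.re * ((1 - normSq ((t:ℂ) - 1)) / normSq (1 - ((t:ℂ) - 1))) + b.re)
          (nhdsWithin 0 (Set.Ioi 0)) (nhds (a.re * ((0:ℝ)/4) + b.re)) :=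
        (tendsto_const_nhds.mul (hlim1.div hlim2 (by norm_num))).add tendsto_const_nhds
      rw [show a.re * ((0:ℝ)/4) + b.re = b.re by norm_num] at hlimb
      apply ge_of_tendsto hlimb
      filter_upwards [hev01] with t ht
      have hzmem : ((t:ℂ) - 1) ∈ unitDisk := by
        simp only [unitDisk, mem_setOf_eq]
        rw [show ((t:ℂ) - 1) = ((t - 1 : ℝ) : ℂ) by push_cast; ring, Complex.norm_real, Real.norm_eq_abs,
          abs_of_neg (by linarith [ht.2])]
        linarith [ht.1]
      have h4 := hre _ hzmem
      rw [hpre _ hzmem] at h4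
      exact h4
    · intro z hz
      rw [hpre z hz]
      have h5 := kernel_re z hz
      have h6 := kernel_re_nonneg z hz
      rw [h5] at h6
      nlinarith [mul_nonneg hare h6]
  · -- converse
    rintro ⟨hb, hpb⟩
    have hγdiff : DifferentiableOn ℂ γ unitDisk := by
      have hCdiff : DifferentiableOn ℂ (fun z : ℂ => a * ((1+z)/(1-z)) + b) unitDisk := by
        apply DifferentiableOn.add ?_ (differentiableOn_const b)
        apply DifferentiableOn.mul (differentiableOn_const a)
        exact DifferentiableOn.div (by fun_prop) (by fun_prop) (fun z hz => one_sub_ne z hz)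
      apply (hp.sub hCdiff).congr
      intro z hz
      simp only [Pi.sub_apply]
      rw [hrep z hz]
      ring
    have hrad : Tendsto (fun t : ℝ => γ (1 - (t:ℂ)) / (t:ℂ)) (nhdsWithin 0 (Set.Ioi 0))
        (nhds 0) := by
      have comp := (hγ 2 one_lt_two).comp (radial_tendsto 2 one_lt_two)
      have comp2 := comp.neg
      rw [neg_zero] at comp2
      apply comp2.congr
      intro t
      simp only [Function.comp]
      rw [show (1 - (t:ℂ)) - 1 = -(t:ℂ) by ring, div_neg, neg_neg]
    by_cases ha0 : a = 0
    · apply zero_on_disk γ hγdiff ?_ hrad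
      intro z hz
      have h3 := hpb z hz
      rw [hrep z hz, ha0] at h3
      simp only [zero_mul, zero_add, Complex.add_re] at h3
      linarith
    · have harepos : 0 < a.re := by
        rcases lt_or_eq_of_le hare with h | h
        · exact h
        · exact absurd (Complex.ext h.symm haim) ha0
      have haA : a = ((a.re : ℝ) : ℂ) := Complex.ext (by simp) (by simp [haim])
      have hhd : DifferentiableOn ℂ (fun z => p z - b) unitDisk :=
        hp.sub (differentiableOn_const b)
      have hhre : ∀ z ∈ unitDisk, 0 ≤ ((fun z => p z - b) z).re := by
        intro z hz
        simp only [Complex.sub_re]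
        linarith [hpb z hz]
      have hhlim : Tendsto (fun t : ℝ => (t:ℂ) * ((fun z => p z - b) (1 - (t:ℂ))))
          (nhdsWithin 0 (Set.Ioi 0)) (nhds ((2*a.re : ℝ) : ℂ)) := by
        have comp := (hcharge 2 one_lt_two).comp (radial_tendsto 2 one_lt_two)
        have hb2 : Tendsto (fun t : ℝ => (t:ℂ) * b) (nhdsWithin 0 (Set.Ioi 0)) (nhds 0) := by
          have h6 : Tendsto (fun t : ℝ => (t:ℂ)) (nhdsWithin 0 (Set.Ioi 0)) (nhds 0) :=
            (Complex.continuous_ofReal.tendsto' 0 0 rfl).mono_left nhdsWithin_le_nhds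
          simpa using h6.mul_const b
        have comp2 := comp.sub hb2
        have h2a : (2*a : ℂ) = ((2*a.re : ℝ) : ℂ) := by
          apply Complex.ext <;> simp [haim]
        rw [sub_zero, h2a] at comp2
        apply comp2.congr
        intro t
        simp only [Function.comp]
        ring
      have hjul := julia (fun z => p z - b) hhd hhre a.re harepos hhlim
      apply zero_on_disk γ hγdiff ?_ hrad
      intro z hz
      have h1 := hjul z hz
      simp only [Complex.sub_re] at h1
      have h4 : γ z = p z - b - a * ((1+z)/(1-z)) := by rw [hrep z hz]; ring
      have h7 : (γ z).re = (p z).re - b.re - a.re * ((1 - normSq z) / normSq (1 - z)) := by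
        rw [h4]
        simp only [Complex.sub_re]
        rw [Complex.mul_re, haim, kernel_re z hz]
        ring
      rw [h7]
      linarith
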